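/- Let G be a disconnected d-distinguishing critical graph (d ≥ 3) with c(G) connected components all isomorphic to H. If c(G) ≥ d/2, then H is a complete graph K_s, and moreover c(G) = C(d−1, s) + 1 and C(d, s) ≥ c(G), where C(·,·) denotes binomial coefficients. -/

import Mathlib

/-- A labeling with `r` labels is distinguishing if the only automorphism
preserving all labels is the identity. -/
def IsDistinguishing {V : Type*} (G : SimpleGraph V) (r : ℕ) (f : V → Fin r) : Prop :=
  ∀ φ : G ≃g G, (∀ v, f (φ v) = f v) → ∀ v, φ v = v

/-- The distinguishing number of a graph. -/
noncomputable def distNum {V : Type*} (G : SimpleGraph V) : ℕ :=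
  sInf {r : ℕ | ∃ f : V → Fin r, IsDistinguishing G r f}

/-- A graph is `d`-distinguishing critical if its distinguishing number is `d`
and no proper induced subgraph has distinguishing number `d`. -/
def DistCritical {V : Type*} (G : SimpleGraph V) (d : ℕ) : Prop :=
  distNum G = d ∧ ∀ s : Set V, s ≠ Set.univ → distNum (G.induce s) ≠ d

/-- The disjoint union of `c` copies of a graph `H`. -/
def copies {W : Type*} (c : ℕ) (H : SimpleGraph W) : SimpleGraph (Fin c × W) where
  Adj a b := a.1 = b.1 ∧ H.Adj a.2 b.2
  symm := ⟨fun a b h => ⟨h.1.symm, h.2.symm⟩⟩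
  loopless := ⟨fun a h => H.irrefl h.2⟩

/-- `numDistLab G k` is the number of inequivalent `k`-distinguishing labelings of `G`,
two labelings being equivalent when some automorphism of `G` maps one to the other. -/
noncomputable def numDistLab {V : Type*} (G : SimpleGraph V) (k : ℕ) : ℕ :=
  Nat.card (Quot (fun f g : {f : V → Fin k // IsDistinguishing G k f} =>
    ∃ φ : G ≃g G, ∀ v, f.1 (φ v) = g.1 v))


section Aux

lemma isDist_of_iso {V V' : Type*} {G : SimpleGraph V} {G' : SimpleGraph V'}
    (e : G ≃g G') {r : ℕ} {f : V' → Fin r} (hf : IsDistinguishing G' r f) :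
    IsDistinguishing G r (f ∘ e) := by
  intro φ hφ v
  have h : ∀ w, (e.symm.trans (φ.trans e)) w = w := by
    apply hf
    intro w
    have h0 : (e.symm.trans (φ.trans e)) w = e (φ (e.symm w)) := rfl
    rw [h0]
    simpa using hφ (e.symm w)
  have h2 : e (φ (e.symm (e v))) = e v := h (e v)
  rw [e.symm_apply_apply] at h2
  exact e.injective h2

lemma distNum_iso {V V' : Type*} {G : SimpleGraph V} {G' : SimpleGraph V'}
    (e : G ≃g G') : distNum G = distNum G' := by
  unfold distNum
  congr 1
  ext r
  constructor
  · rintro ⟨f, hf⟩; exact ⟨f ∘ e.symm, isDist_of_iso e.symm hf⟩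
  · rintro ⟨f, hf⟩; exact ⟨f ∘ e, isDist_of_iso e hf⟩

def isoOfEdgeless {V V' : Type*} {G : SimpleGraph V} {G' : SimpleGraph V'}
    (h : ∀ a b, ¬G.Adj a b) (h' : ∀ a b, ¬G'.Adj a b) (e : V ≃ V') : G ≃g G' :=
  ⟨e, by intro a b; simp [h a b, h' (e a) (e b)]⟩

lemma isDist_of_injective {V : Type*} {G : SimpleGraph V} {r : ℕ} {f : V → Fin r}
    (hf : Function.Injective f) : IsDistinguishing G r f :=
  fun _ hφ v => hf (hφ v)

lemma distNum_bot (n : ℕ) : distNum (⊥ : SimpleGraph (Fin n)) = n := by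
  have h1 : ∀ r ∈ {r : ℕ | ∃ f : Fin n → Fin r, IsDistinguishing (⊥ : SimpleGraph (Fin n)) r f}, n ≤ r := by
    rintro r ⟨f, hf⟩
    by_contra hr
    push_neg at hr
    obtain ⟨a, b, hab, hfab⟩ := Fintype.exists_ne_map_eq_of_card_lt f (by simpa using hr)
    let hsw : (⊥ : SimpleGraph (Fin n)) ≃g (⊥ : SimpleGraph (Fin n)) :=
      ⟨Equiv.swap a b, by simp⟩
    have hpres : ∀ v, f (hsw v) = f v := by
      intro v
      have hv : hsw v = Equiv.swap a b v := rfl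
      rw [hv]
      rcases eq_or_ne v a with rfl | hva
      · rw [Equiv.swap_apply_left]; exact hfab.symm
      rcases eq_or_ne v b with rfl | hvb
      · rw [Equiv.swap_apply_right]; exact hfab
      · rw [Equiv.swap_apply_of_ne_of_ne hva hvb]
    have := hf hsw hpres a
    have ha : hsw a = Equiv.swap a b a := rfl
    rw [ha, Equiv.swap_apply_left] at this
    exact hab this.symm
  have h2 : n ∈ {r : ℕ | ∃ f : Fin n → Fin r, IsDistinguishing (⊥ : SimpleGraph (Fin n)) r f} :=
    ⟨id, isDist_of_injective fun a b h => h⟩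
  exact le_antisymm (Nat.sInf_le h2) (h1 _ (Nat.sInf_mem ⟨n, h2⟩))

lemma copies_adj {W : Type*} (c : ℕ) (H : SimpleGraph W) (a b : Fin c × W) :
    (copies c H).Adj a b ↔ a.1 = b.1 ∧ H.Adj a.2 b.2 := Iff.rfl

def copiesIso {W W' : Type*} {H : SimpleGraph W} {H' : SimpleGraph W'} (c : ℕ)
    (e : H ≃g H') : copies c H ≃g copies c H' :=
  ⟨Equiv.prodCongr (Equiv.refl _) e.toEquiv, by
    intro a b
    simp only [copies_adj, Equiv.prodCongr_apply, Prod.map, Equiv.refl_apply]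
    exact and_congr Iff.rfl e.map_adj_iff⟩

def inducePreimageIso {V V' : Type*} {G : SimpleGraph V} {G' : SimpleGraph V'}
    (e : G ≃g G') (T : Set V') : G.induce (⇑e ⁻¹' T) ≃g G'.induce T :=
  ⟨e.toEquiv.subtypeEquiv (fun _ => Iff.rfl), by
    intro a b
    simp only [SimpleGraph.comap_adj, Function.Embedding.coe_subtype, Equiv.subtypeEquiv_apply]
    exact e.map_adj_iff⟩

def induceInitIso {s : ℕ} (c c' : ℕ) (hcc : c' ≤ c) :
    (copies c (⊤ : SimpleGraph (Fin s))).induce {x : Fin c × Fin s | (x.1 : ℕ) < c'} ≃g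
      copies c' (⊤ : SimpleGraph (Fin s)) := by
  refine ⟨⟨fun x => (⟨(x.1.1 : ℕ), x.2⟩, x.1.2), fun y => ⟨(⟨(y.1 : ℕ), lt_of_lt_of_le y.1.2 hcc⟩, y.2), y.1.2⟩, ?_, ?_⟩, ?_⟩
  · rintro ⟨⟨a, w⟩, h⟩; rfl
  · rintro ⟨a, w⟩; rfl
  · rintro ⟨⟨a, w⟩, ha⟩ ⟨⟨b, u⟩, hb⟩
    simp only [copies_adj, SimpleGraph.comap_adj, Function.Embedding.coe_subtype,
      SimpleGraph.top_adj, Equiv.coe_fn_mk]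
    constructor
    · rintro ⟨h1, h2⟩
      exact ⟨by rw [Fin.ext_iff] at h1 ⊢; exact h1, h2⟩
    · rintro ⟨h1, h2⟩
      exact ⟨by rw [Fin.ext_iff] at h1 ⊢; exact h1, h2⟩

def copiesTopIsoOfFst {c s : ℕ} (e : (Fin c × Fin s) ≃ (Fin c × Fin s))
    (hfst : ∀ a b, ((e a).1 = (e b).1 ↔ a.1 = b.1)) :
    copies c (⊤ : SimpleGraph (Fin s)) ≃g copies c (⊤ : SimpleGraph (Fin s)) := by
  refine ⟨e, ?_⟩
  intro a b
  simp only [copies_adj, SimpleGraph.top_adj]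
  constructor
  · rintro ⟨h1, h2⟩
    refine ⟨(hfst a b).1 h1, fun hsnd => h2 ?_⟩
    have hab : a = b := Prod.ext ((hfst a b).1 h1) hsnd
    rw [hab]
  · rintro ⟨h1, h2⟩
    refine ⟨(hfst a b).2 h1, fun hsnd => h2 ?_⟩
    have : e a = e b := Prod.ext ((hfst a b).2 h1) hsnd
    have hab := e.injective this
    rw [hab]

end Aux
lemma le_choose_of_distinguishing {c s p : ℕ} (hs : 1 ≤ s) {f : Fin c × Fin s → Fin p}
    (hf : IsDistinguishing (copies c (⊤ : SimpleGraph (Fin s))) p f) :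
    c ≤ p.choose s := by
  classical
  -- labels are injective within each component
  have hinj : ∀ i : Fin c, Function.Injective (fun w => f (i, w)) := by
    intro i w w' hww
    by_contra hne
    have hfst : ∀ a : Fin c × Fin s, (Equiv.swap (i,w) (i,w') a).1 = a.1 := by
      intro a
      rcases eq_or_ne a (i,w) with rfl | h1
      · rw [Equiv.swap_apply_left]
      rcases eq_or_ne a (i,w') with rfl | h2
      · rw [Equiv.swap_apply_right]
      · rw [Equiv.swap_apply_of_ne_of_ne h1 h2]
    let φ := copiesTopIsoOfFst (Equiv.swap (i,w) (i,w'))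
      (fun a b => by rw [hfst a, hfst b])
    have hφ : ∀ a, φ a = Equiv.swap (i,w) (i,w') a := fun a => rfl
    have hpres : ∀ v, f (φ v) = f v := by
      intro v
      rw [hφ]
      rcases eq_or_ne v (i,w) with rfl | h1
      · rw [Equiv.swap_apply_left]; exact hww.symm
      rcases eq_or_ne v (i,w') with rfl | h2
      · rw [Equiv.swap_apply_right]; exact hww
      · rw [Equiv.swap_apply_of_ne_of_ne h1 h2]
    have := hf φ hpres (i, w)
    rw [hφ, Equiv.swap_apply_left] at this
    exact hne (congrArg Prod.snd this).symm
  -- the component label sets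
  set F : Fin c → Finset (Fin p) := fun i => Finset.image (fun w => f (i, w)) Finset.univ with hF
  have hcard : ∀ i, (F i).card = s := by
    intro i
    rw [hF]
    rw [Finset.card_image_of_injective _ (hinj i), Finset.card_univ, Fintype.card_fin]
  have hFinj : Function.Injective F := by
    intro i j hij
    by_contra hne
    -- build a matching bijection between the two components
    have hch : ∀ w : Fin s, ∃ w' : Fin s, f (j, w') = f (i, w) := by
      intro w
      have : f (i, w) ∈ F j := by
        rw [← hij, hF]
        exact Finset.mem_image.2 ⟨w, Finset.mem_univ w, rfl⟩
      rw [hF] at this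
      obtain ⟨w', _, hw'⟩ := Finset.mem_image.1 this
      exact ⟨w', hw'⟩
    choose β hβ using hch
    have hβinj : Function.Injective β := by
      intro w w' h
      exact hinj i (show f (i,w) = f (i,w') by rw [← hβ w, ← hβ w', h])
    have hβbij : Function.Bijective β := (Finite.injective_iff_bijective).1 hβinj
    let B : Fin s ≃ Fin s := Equiv.ofBijective β hβbij
    have hB : ∀ w, f (j, B w) = f (i, w) := hβ
    -- the component swap map
    let m : Fin c × Fin s → Fin c × Fin s := fun x =>
      if x.1 = i then (j, B x.2) else if x.1 = j then (i, B.symm x.2) else x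
    have hmfst : ∀ x, (m x).1 = Equiv.swap i j x.1 := by
      intro x
      show (if x.1 = i then (j, B x.2) else if x.1 = j then (i, B.symm x.2) else x).1 = _
      rw [Equiv.swap_apply_def]
      split_ifs <;> rfl
    have hminv : Function.Involutive m := by
      intro x
      show m (m x) = x
      by_cases h1 : x.1 = i
      · have : m x = (j, B x.2) := if_pos h1
        rw [this]
        show (if j = i then _ else if j = j then ((i : Fin c), B.symm (B x.2)) else _) = x
        rw [if_neg (fun h : (j : Fin c) = i => hne h.symm), if_pos rfl]
        exact Prod.ext h1.symm (by simp)
      by_cases h2 : x.1 = j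
      · have : m x = (i, B.symm x.2) := by
          show (if x.1 = i then _ else if x.1 = j then ((i : Fin c), B.symm x.2) else x) = _
          rw [if_neg h1, if_pos h2]
        rw [this]
        show (if i = i then ((j : Fin c), B (B.symm x.2)) else _) = x
        rw [if_pos rfl]
        exact Prod.ext h2.symm (by simp)
      · have hx : m x = x := by
          show (if x.1 = i then _ else if x.1 = j then _ else x) = x
          rw [if_neg h1, if_neg h2]
        rw [hx, hx]
    let E : (Fin c × Fin s) ≃ (Fin c × Fin s) := hminv.toPerm
    have hEm : ∀ x, E x = m x := fun x => rfl
    have hne' : i ≠ j := hne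
    let φ := copiesTopIsoOfFst E (fun a b => by
      rw [hEm, hEm, hmfst, hmfst]
      exact (Equiv.swap i j).injective.eq_iff)
    have hφ : ∀ a, φ a = m a := fun a => rfl
    have hpres : ∀ v, f (φ v) = f v := by
      intro v
      rw [hφ]
      by_cases h1 : v.1 = i
      · have : m v = (j, B v.2) := if_pos h1
        rw [this, hB]
        exact congrArg f (Prod.ext h1.symm rfl)
      by_cases h2 : v.1 = j
      · have : m v = (i, B.symm v.2) := by
          show (if v.1 = i then _ else if v.1 = j then ((i : Fin c), B.symm v.2) else v) = _
          rw [if_neg h1, if_pos h2]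
        rw [this]
        have := hB (B.symm v.2)
        rw [Equiv.apply_symm_apply] at this
        rw [← this]
        exact congrArg f (Prod.ext h2.symm rfl)
      · have : m v = v := by
          show (if v.1 = i then _ else if v.1 = j then _ else v) = v
          rw [if_neg h1, if_neg h2]
        rw [this]
    have w0 : Fin s := ⟨0, hs⟩
    have := hf φ hpres (i, w0)
    rw [hφ] at this
    have hmi : m (i, w0) = (j, B w0) := if_pos rfl
    rw [hmi] at this
    exact hne' (congrArg Prod.fst this).symm
  -- conclude by counting
  have : Function.Injective (fun i : Fin c => (⟨F i, hcard i⟩ : {t : Finset (Fin p) // t.card = s})) := by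
    intro i j h
    exact hFinj (congrArg Subtype.val h)
  have hle := Fintype.card_le_of_injective _ this
  rwa [Fintype.card_fin, Fintype.card_finset_len, Fintype.card_fin] at hle
lemma copies_top_fst_eq_iff {c s : ℕ} (a b : Fin c × Fin s) :
    a.1 = b.1 ↔ (a = b ∨ (copies c (⊤ : SimpleGraph (Fin s))).Adj a b) := by
  constructor
  · intro h
    by_cases hab : a = b
    · exact Or.inl hab
    · exact Or.inr ⟨h, fun hsnd => hab (Prod.ext h hsnd)⟩
  · rintro (rfl | ⟨h, _⟩)
    · rfl
    · exact h

lemma exists_distinguishing_copies_top {c s p : ℕ} (hs : 1 ≤ s) (hcp : c ≤ p.choose s) :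
    ∃ f : Fin c × Fin s → Fin p, IsDistinguishing (copies c (⊤ : SimpleGraph (Fin s))) p f := by
  classical
  obtain ⟨emb⟩ : Nonempty (Fin c ↪ {t : Finset (Fin p) // t.card = s}) := by
    apply Function.Embedding.nonempty_of_card_le
    rw [Fintype.card_fin, Fintype.card_finset_len, Fintype.card_fin]
    exact hcp
  let eq1 : ∀ i : Fin c, Fin s ≃ {x // x ∈ (emb i).1} := fun i =>
    (Finset.equivFinOfCardEq (emb i).2).symm
  let f : Fin c × Fin s → Fin p := fun x => ((eq1 x.1 x.2 : {y // y ∈ (emb x.1).1}) : Fin p)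
  have hfc : ∀ i w, f (i, w) = ((eq1 i w : {y // y ∈ (emb i).1}) : Fin p) := fun i w => rfl
  have hinj : ∀ i, Function.Injective (fun w => f (i, w)) := by
    intro i w w' h
    have h : f (i, w) = f (i, w') := h
    rw [hfc, hfc] at h
    exact (eq1 i).injective (Subtype.ext h)
  have himage : ∀ i, Finset.image (fun w => f (i, w)) Finset.univ = (emb i).1 := by
    intro i
    apply Finset.ext
    intro x
    rw [Finset.mem_image]
    constructor
    · rintro ⟨w, _, rfl⟩
      exact ((eq1 i) w).2
    · intro hx
      exact ⟨(eq1 i).symm ⟨x, hx⟩, Finset.mem_univ _, by rw [hfc, Equiv.apply_symm_apply]⟩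
  refine ⟨f, ?_⟩
  intro φ hφ v
  have hfst : ∀ a b : Fin c × Fin s, (φ a).1 = (φ b).1 ↔ a.1 = b.1 := by
    intro a b
    rw [copies_top_fst_eq_iff (φ a) (φ b), copies_top_fst_eq_iff a b]
    exact or_congr ⟨fun h => φ.injective h, fun h => congrArg φ h⟩ φ.map_adj_iff
  -- each component is mapped into a single component
  obtain ⟨i, w⟩ := v
  have hcomp : ∀ u : Fin s, (φ (i, u)).1 = (φ (i, w)).1 := by
    intro u
    exact (hfst (i, u) (i, w)).2 rfl
  set j := (φ (i, w)).1 with hj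
  let ψ : Fin s → Fin s := fun u => (φ (i, u)).2
  have hφiu : ∀ u, φ (i, u) = (j, ψ u) := by
    intro u
    exact Prod.ext (hcomp u) rfl
  have hψinj : Function.Injective ψ := by
    intro u u' h
    have : φ (i, u) = φ (i, u') := by rw [hφiu, hφiu, h]
    exact (congrArg Prod.snd (φ.injective this) : u = u')
  have hψsurj : Function.Surjective ψ := (Finite.injective_iff_surjective).1 hψinj
  -- the label sets of components i and j agree
  have hTij : (emb j).1 = (emb i).1 := by
    rw [← himage, ← himage]
    apply Finset.ext
    intro x
    rw [Finset.mem_image, Finset.mem_image]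
    constructor
    · rintro ⟨u, _, rfl⟩
      obtain ⟨u', hu'⟩ := hψsurj u
      refine ⟨u', Finset.mem_univ _, ?_⟩
      rw [← hφ (i, u')]
      rw [hφiu u', hu']
    · rintro ⟨u, _, rfl⟩
      refine ⟨ψ u, Finset.mem_univ _, ?_⟩
      rw [← hφiu u, hφ]
  have hji : j = i := emb.injective (Subtype.ext hTij)
  have hψw : ∀ u, ψ u = u := by
    intro u
    apply hinj i
    show f (i, ψ u) = f (i, u)
    calc f (i, ψ u) = f (j, ψ u) := by rw [hji]
    _ = f (φ (i, u)) := by rw [hφiu]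
    _ = f (i, u) := hφ (i, u)
  rw [hφiu w, hji, hψw]

lemma distNum_set_eq {c s : ℕ} (hs : 1 ≤ s) :
    {p : ℕ | ∃ f : Fin c × Fin s → Fin p,
        IsDistinguishing (copies c (⊤ : SimpleGraph (Fin s))) p f} = {p : ℕ | c ≤ p.choose s} :=
  Set.ext fun _ => ⟨fun ⟨_, hf⟩ => le_choose_of_distinguishing hs hf,
    fun h => exists_distinguishing_copies_top hs h⟩

lemma distNum_copies_top {c s : ℕ} (hs : 1 ≤ s) :
    distNum (copies c (⊤ : SimpleGraph (Fin s))) = sInf {p : ℕ | c ≤ p.choose s} := by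
  unfold distNum
  rw [distNum_set_eq hs]

lemma choose_set_nonempty (c s : ℕ) (hs : 1 ≤ s) : {p : ℕ | c ≤ p.choose s}.Nonempty := by
  rw [← distNum_set_eq hs]
  exact ⟨c * s, finProdFinEquiv, isDist_of_injective finProdFinEquiv.injective⟩

lemma sInf_choose_eq {c s d : ℕ} (hd : 1 ≤ d) (hs : 1 ≤ s) (h1 : c ≤ d.choose s)
    (h2 : (d - 1).choose s < c) : sInf {p : ℕ | c ≤ p.choose s} = d := by
  refine le_antisymm (Nat.sInf_le h1) ?_
  by_contra hlt
  push_neg at hlt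
  have hmem : c ≤ (sInf {p : ℕ | c ≤ p.choose s}).choose s :=
    Nat.sInf_mem (choose_set_nonempty c s hs)
  have h3 : sInf {p : ℕ | c ≤ p.choose s} ≤ d - 1 := by omega
  have h4 := le_trans hmem (Nat.choose_le_choose s h3)
  exact lt_irrefl _ (lt_of_lt_of_le h2 h4)

theorem stmt15 {V W : Type*} [Fintype V] [Fintype W] (G : SimpleGraph V)
    (H : SimpleGraph W) (d c : ℕ) (hd : 3 ≤ d) (hc : 2 ≤ c)
    (hH : H.Connected) (hiso : Nonempty (G ≃g copies c H))
    (hcrit : DistCritical G d) (hbig : d ≤ 2 * c) :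
    ∃ s : ℕ, Nonempty (H ≃g (⊤ : SimpleGraph (Fin s))) ∧
      c = Nat.choose (d - 1) s + 1 ∧ c ≤ Nat.choose d s := by
  classical
  obtain ⟨e⟩ := hiso
  have hc0 : 0 < c := by omega
  -- Step 1 : H is complete
  have hcomp : ∀ w₁ w₂ : W, w₁ ≠ w₂ → H.Adj w₁ w₂ := by
    by_contra hcon
    push_neg at hcon
    obtain ⟨w₁, w₂, hne, hnadj⟩ := hcon
    let ι : Fin d → Fin c × W := fun t =>
      if h : (t : ℕ) < c then (⟨t, h⟩, w₁)
      else (⟨(t : ℕ) - c, by have := t.isLt; omega⟩, w₂)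
    have hι2 : ∀ t, (ι t).2 = w₁ ∨ (ι t).2 = w₂ := by
      intro t
      by_cases h : (t : ℕ) < c
      · left; show (dite _ _ _ : Fin c × W).2 = w₁; rw [dif_pos h]
      · right; show (dite _ _ _ : Fin c × W).2 = w₂; rw [dif_neg h]
    have hιinj : Function.Injective ι := by
      intro t t' h
      by_cases h1 : (t : ℕ) < c <;> by_cases h2 : (t' : ℕ) < c <;>
        simp only [ι] at h
      · rw [dif_pos h1, dif_pos h2] at h
        have := congrArg (fun x : Fin c × W => (x.1 : ℕ)) h
        simp at this
        exact Fin.ext this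
      · rw [dif_pos h1, dif_neg h2] at h
        exact absurd (congrArg Prod.snd h) hne
      · rw [dif_neg h1, dif_pos h2] at h
        exact absurd (congrArg Prod.snd h).symm hne
      · rw [dif_neg h1, dif_neg h2] at h
        have := congrArg (fun x : Fin c × W => (x.1 : ℕ)) h
        simp at this
        have ht := t.isLt; have ht' := t'.isLt
        exact Fin.ext (by omega)
    -- no two chosen vertices are adjacent
    have hind : ∀ a b : Fin c × W, (a.2 = w₁ ∨ a.2 = w₂) → (b.2 = w₁ ∨ b.2 = w₂) →
        ¬ (copies c H).Adj a b := by
      rintro a b ha hb ⟨-, hadj⟩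
      rcases ha with ha | ha <;> rcases hb with hb | hb <;> rw [ha, hb] at hadj
      · exact H.irrefl hadj
      · exact hnadj hadj
      · exact hnadj hadj.symm
      · exact H.irrefl hadj
    set T : Set (Fin c × W) := Set.range ι with hT
    set S : Set V := ⇑e ⁻¹' T with hS
    have hTsnd : ∀ x ∈ T, x.2 = w₁ ∨ x.2 = w₂ := by
      rintro x ⟨t, rfl⟩
      exact hι2 t
    have hSne : S ≠ Set.univ := by
      intro huniv
      have hTall : ∀ x : Fin c × W, x ∈ T := by
        intro x
        have h1 : e.symm x ∈ S := by rw [huniv]; trivial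
        rw [hS, Set.mem_preimage, RelIso.apply_symm_apply] at h1
        exact h1
      obtain ⟨a, b, hab⟩ : ∃ a b : W, H.Adj a b := by
        obtain ⟨pw⟩ := hH.preconnected w₁ w₂
        cases pw with
        | nil => exact absurd rfl hne
        | cons h _ => exact ⟨_, _, h⟩
      exact hind (⟨0, hc0⟩, a) (⟨0, hc0⟩, b) (hTsnd _ (hTall _)) (hTsnd _ (hTall _))
        ⟨rfl, hab⟩
    apply hcrit.2 S hSne
    have hedgeless : ∀ a b : ↥T, ¬ ((copies c H).induce T).Adj a b := by
      intro a b hadj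
      exact hind a.1 b.1 (hTsnd _ a.2) (hTsnd _ b.2) hadj
    have hiso2 : G.induce S ≃g (⊥ : SimpleGraph (Fin d)) :=
      (inducePreimageIso e T).trans
        (isoOfEdgeless hedgeless (by intro a b; exact fun h => h.elim)
          ((Equiv.ofInjective ι hιinj).symm))
    rw [distNum_iso hiso2, distNum_bot]
  -- Step 2 : transfer to the model graph
  have hWne : Nonempty W := hH.nonempty
  set s := Fintype.card W with hsdef
  have hs : 1 ≤ s := Fintype.card_pos
  have hHtop : H ≃g (⊤ : SimpleGraph (Fin s)) := by
    refine ⟨Fintype.equivFin W, ?_⟩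
    intro a b
    simp only [SimpleGraph.top_adj, ne_eq, EmbeddingLike.apply_eq_iff_eq]
    exact ⟨fun h => hcomp a b h, fun h => h.ne⟩
  have e2 : G ≃g copies c (⊤ : SimpleGraph (Fin s)) := e.trans (copiesIso c hHtop)
  have hdist : sInf {p : ℕ | c ≤ p.choose s} = d := by
    rw [← distNum_copies_top hs, ← distNum_iso e2]
    exact hcrit.1
  have hdmem : c ≤ d.choose s := by
    have := Nat.sInf_mem (choose_set_nonempty c s hs)
    rwa [hdist] at this
  have hlow : (d - 1).choose s < c := by
    by_contra hcon
    push_neg at hcon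
    have := Nat.sInf_le (show (d - 1) ∈ {p : ℕ | c ≤ p.choose s} from hcon)
    omega
  have hupper : c ≤ (d - 1).choose s + 1 := by
    by_contra hgt
    push_neg at hgt
    set c' := (d - 1).choose s + 1 with hc'
    have hc'c : c' ≤ c := by omega
    set T' : Set (Fin c × Fin s) := {x : Fin c × Fin s | (x.1 : ℕ) < c'} with hT'
    set S' : Set V := ⇑e2 ⁻¹' T' with hS'
    have hS'ne : S' ≠ Set.univ := by
      intro huniv
      have hx : (⟨(⟨c', by omega⟩ : Fin c), (⟨0, hs⟩ : Fin s)⟩ : Fin c × Fin s) ∈ T' := by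
        have h1 : e2.symm (⟨c', by omega⟩, ⟨0, hs⟩) ∈ S' := by rw [huniv]; trivial
        rwa [hS', Set.mem_preimage, RelIso.apply_symm_apply] at h1
      have hx' : (c' : ℕ) < c' := hx
      omega
    apply hcrit.2 S' hS'ne
    have hiso3 : G.induce S' ≃g copies c' (⊤ : SimpleGraph (Fin s)) :=
      (inducePreimageIso e2 T').trans (induceInitIso c c' hc'c)
    rw [distNum_iso hiso3, distNum_copies_top hs]
    exact sInf_choose_eq (by omega) hs (le_trans hc'c hdmem) (by omega)
  exact ⟨s, ⟨hHtop⟩, by omega, hdmem⟩
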